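/- arXiv:1307.0098 — 4 statements merged into one kernel-verified Lean document; each statement's English description precedes it below -/
import Mathlib

section
/- Let η : ℤ² → A with A finite, and let S ⊂ ℤ² be finite with a subset w ⊂ S such that D_η(S∖w) > D_η(S). Then the number of η-colorings of S∖w that extend non-uniquely to an η-coloring of S is at most |w ∩ S| − 1. -/
noncomputable def Pcx {A : Type*} (η : ℤ × ℤ → A) (S : Finset (ℤ × ℤ)) : ℕ :=
  Set.ncard {g : S → A | ∃ u : ℤ × ℤ, ∀ x : S, g x = η ((x : ℤ × ℤ) + u)}

noncomputable def Dcx {A : Type*} (η : ℤ × ℤ → A) (S : Finset (ℤ × ℤ)) : ℤ :=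
  (Pcx η S : ℤ) - S.card

/-- if D_η(S∖w) > D_η(S) then the number of η-colorings of S∖w that
extend non-uniquely to an η-coloring of S is at most |w ∩ S| − 1.  A coloring of
S∖w extends non-uniquely if two translates of η realize it on S∖w but differ
somewhere on S. -/
theorem stmt_5 {A : Type*} [Fintype A] (η : ℤ × ℤ → A) (S w : Finset (ℤ × ℤ))
    (hw : w ⊆ S) (hD : Dcx η S < Dcx η (S \ w)) :
    (Set.ncard {g : (S \ w : Finset (ℤ × ℤ)) → A |
        ∃ u v : ℤ × ℤ,
          (∀ x : (S \ w : Finset (ℤ × ℤ)), g x = η ((x : ℤ × ℤ) + u)) ∧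
          (∀ x : (S \ w : Finset (ℤ × ℤ)), g x = η ((x : ℤ × ℤ) + v)) ∧
          ∃ y ∈ S, η (y + u) ≠ η (y + v)} : ℤ)
      ≤ (w ∩ S).card - 1 := by
  classical
  set T : Finset (ℤ × ℤ) := S \ w with hT
  set N : Set (↥T → A) := {g : ↥T → A |
        ∃ u v : ℤ × ℤ,
          (∀ x : ↥T, g x = η ((x : ℤ × ℤ) + u)) ∧
          (∀ x : ↥T, g x = η ((x : ℤ × ℤ) + v)) ∧
          ∃ y ∈ S, η (y + u) ≠ η (y + v)} with hN
  set WS : Set (↥S → A) := {g : ↥S → A | ∃ u : ℤ × ℤ, ∀ x : ↥S, g x = η ((x : ℤ × ℤ) + u)}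
    with hWS
  set WT : Set (↥T → A) := {g : ↥T → A | ∃ u : ℤ × ℤ, ∀ x : ↥T, g x = η ((x : ℤ × ℤ) + u)}
    with hWT
  have hTS : T ⊆ S := Finset.sdiff_subset
  let inc : ↥T → ↥S := fun x => ⟨(x : ℤ × ℤ), hTS x.2⟩
  let π : (↥S → A) → (↥T → A) := fun g => g ∘ inc
  let E : (ℤ × ℤ) → (↥S → A) := fun u x => η ((x : ℤ × ℤ) + u)
  have hE : ∀ u, E u ∈ WS := fun u => ⟨u, fun _ => rfl⟩
  -- a section on WT
  have hsec : ∀ g : ↥T → A, ∃ u : ℤ × ℤ, g ∈ WT → ∀ x : ↥T, g x = η ((x : ℤ × ℤ) + u) := by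
    intro g
    by_cases h : g ∈ WT
    · obtain ⟨u, hu⟩ := h
      exact ⟨u, fun _ => hu⟩
    · exact ⟨0, fun h' => absurd h' h⟩
  choose σ hσ using hsec
  -- the two witnesses on N
  have hbad : ∀ g : ↥T → A, ∃ u v : ℤ × ℤ, g ∈ N →
      (∀ x : ↥T, g x = η ((x : ℤ × ℤ) + u)) ∧
      (∀ x : ↥T, g x = η ((x : ℤ × ℤ) + v)) ∧
      ∃ y ∈ S, η (y + u) ≠ η (y + v) := by
    intro g
    by_cases h : g ∈ N
    · obtain ⟨u, v, h1, h2, h3⟩ := h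
      exact ⟨u, v, fun _ => ⟨h1, h2, h3⟩⟩
    · exact ⟨0, 0, fun h' => absurd h' h⟩
  choose uu vv huv using hbad
  let φ : (↥T → A) → (↥S → A) := fun g => E (σ g)
  let ψ : (↥T → A) → (↥S → A) := fun g => if E (uu g) = φ g then E (vv g) else E (uu g)
  have hπφ : ∀ g ∈ WT, π (φ g) = g := by
    intro g hg
    funext x
    exact (hσ g hg x).symm
  have hNWT : N ⊆ WT := by
    rintro g ⟨u, v, h1, _, _⟩
    exact ⟨u, h1⟩
  have hπψ : ∀ g ∈ N, π (ψ g) = g ∧ ψ g ≠ φ g := by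
    intro g hg
    obtain ⟨h1, h2, y, hy, hne⟩ := huv g hg
    have hπu : π (E (uu g)) = g := by
      funext x; exact (h1 x).symm
    have hπv : π (E (vv g)) = g := by
      funext x; exact (h2 x).symm
    have hEuv : E (uu g) ≠ E (vv g) := by
      intro h
      exact hne (congrFun h ⟨y, hy⟩)
    by_cases h : E (uu g) = φ g
    · refine ⟨?_, ?_⟩
      · simp only [ψ, if_pos h, hπv]
      · simp only [ψ, if_pos h]
        rw [← h]
        exact fun hc => hEuv hc.symm
    · exact ⟨by simp only [ψ, if_neg h, hπu], by simpa [ψ, if_neg h] using h⟩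
  have hφWS : ∀ g, φ g ∈ WS := fun g => hE _
  have hψWS : ∀ g, ψ g ∈ WS := by
    intro g
    by_cases h : E (uu g) = φ g
    · simp only [ψ, if_pos h]; exact hE _
    · simp only [ψ, if_neg h]; exact hE _
  have hinjφ : Set.InjOn φ WT := by
    intro g hg g' hg' h
    have := congrArg π h
    rwa [hπφ g hg, hπφ g' hg'] at this
  have hinjψ : Set.InjOn ψ N := by
    intro g hg g' hg' h
    have := congrArg π h
    rwa [(hπψ g hg).1, (hπψ g' hg').1] at this
  have hdisj : Disjoint (φ '' WT) (ψ '' N) := by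
    rw [Set.disjoint_left]
    rintro a ⟨g, hg, rfl⟩ ⟨g', hg', heq⟩
    have hgg : g' = g := by
      have := congrArg π heq
      rwa [(hπψ g' hg').1, hπφ g hg] at this
    exact (hπψ g' hg').2 (heq.trans (congrArg φ hgg.symm))
  -- counting
  have hcount : WT.ncard + N.ncard ≤ WS.ncard := by
    have h1 : (φ '' WT).ncard = WT.ncard := Set.ncard_image_of_injOn hinjφ
    have h2 : (ψ '' N).ncard = N.ncard := Set.ncard_image_of_injOn hinjψ
    have h3 : (φ '' WT ∪ ψ '' N).ncard = (φ '' WT).ncard + (ψ '' N).ncard :=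
      Set.ncard_union_eq hdisj (Set.toFinite _) (Set.toFinite _)
    have h4 : (φ '' WT ∪ ψ '' N) ⊆ WS := by
      rintro a (⟨g, _, rfl⟩ | ⟨g, _, rfl⟩)
      · exact hφWS g
      · exact hψWS g
    have h5 : (φ '' WT ∪ ψ '' N).ncard ≤ WS.ncard :=
      Set.ncard_le_ncard h4 (Set.toFinite _)
    omega
  have hPS : Pcx η S = WS.ncard := rfl
  have hPT : Pcx η T = WT.ncard := rfl
  have hDS : Dcx η S = (WS.ncard : ℤ) - S.card := by rw [Dcx, hPS]
  have hDT : Dcx η T = (WT.ncard : ℤ) - T.card := by rw [Dcx, hPT]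
  have hcardT : (T.card : ℤ) = S.card - w.card := by
    rw [hT, Finset.card_sdiff_of_subset hw]
    have := Finset.card_le_card hw
    omega
  have hwS : (w ∩ S) = w := Finset.inter_eq_left.mpr hw
  rw [hwS]
  rw [hDS, hDT, hcardT] at hD
  have hc : (WT.ncard : ℤ) + N.ncard ≤ WS.ncard := by exact_mod_cast hcount
  linarith
end

section
/- (Morse–Hedlund, one-sided eventual periodicity) Let α : ℕ → C be a sequence in a set C, and suppose there exists n ∈ ℕ such that the number of distinct words α(m)α(m+1)⋯α(m+n−1) of length n occurring in α is at most n. Then α is eventually periodic with period at most n, and the initial non-periodic portion has length at most n. -/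
open Set

private def occ {C : Type*} (α : ℕ → C) (k : ℕ) : Set (Fin k → C) :=
  {w | ∃ m : ℕ, ∀ i : Fin k, w i = α (m + i)}

private def win {C : Type*} (α : ℕ → C) (k m : ℕ) : Fin k → C := fun i => α (m + i)

private lemma win_mem {C : Type*} (α : ℕ → C) (k m : ℕ) : win α k m ∈ occ α k :=
  ⟨m, fun _ => rfl⟩

private lemma occ_image {C : Type*} (α : ℕ → C) (k : ℕ) :
    (fun w : Fin (k + 1) → C => w ∘ Fin.castSucc) '' occ α (k + 1) = occ α k := by
  ext w
  constructor
  · rintro ⟨v, ⟨m, hm⟩, rfl⟩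
    exact ⟨m, fun i => by simpa using hm (Fin.castSucc i)⟩
  · rintro ⟨m, hm⟩
    refine ⟨win α (k + 1) m, win_mem α (k + 1) m, ?_⟩
    funext i
    simp [win, hm i]

private lemma occ_mono {C : Type*} [Finite C] (α : ℕ → C) (k : ℕ) :
    (occ α k).ncard ≤ (occ α (k + 1)).ncard := by
  rw [← occ_image α k]
  exact Set.ncard_image_le (Set.toFinite _)

private lemma occ_mono' {C : Type*} [Finite C] (α : ℕ → C) {j k : ℕ} (h : j ≤ k) :
    (occ α j).ncard ≤ (occ α k).ncard := by
  induction k with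
  | zero =>
    have : j = 0 := Nat.le_zero.mp h
    subst this; exact le_rfl
  | succ k ih =>
    rcases Nat.lt_or_ge j (k + 1) with h' | h'
    · exact (ih (by omega)).trans (occ_mono α k)
    · have : j = k + 1 := by omega
      subst this; rfl

private lemma occ_zero {C : Type*} (α : ℕ → C) : (occ α 0).ncard = 1 := by
  have : occ α 0 = Set.univ := by
    ext w
    simp only [Set.mem_univ, iff_true]
    exact ⟨0, fun i => i.elim0⟩
  rw [this, Set.ncard_univ]
  simp [Nat.card_eq_one_iff_unique]

/-- one-sided Morse–Hedlund, eventual periodicity: if the number of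
distinct words of length n occurring in α : ℕ → C is at most n, then α is eventually
periodic with period at most n and the initial non-periodic portion has length at
most n. -/
theorem stmt_8 {C : Type*} [Finite C] (α : ℕ → C) (n : ℕ)
    (h : Set.ncard {w : Fin n → C | ∃ m : ℕ, ∀ i : Fin n, w i = α (m + i)} ≤ n) :
    ∃ p N : ℕ, 1 ≤ p ∧ p ≤ n ∧ N ≤ n ∧ ∀ m : ℕ, N ≤ m → α (m + p) = α m := by
  classical
  replace h : (occ α n).ncard ≤ n := h
  have hn : 1 ≤ n := by
    by_contra hn
    have : n = 0 := by omega
    subst this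
    rw [occ_zero] at h
    omega
  -- find a plateau k < n with equal cardinalities
  have hplateau : ∃ k < n, (occ α k).ncard = (occ α (k + 1)).ncard := by
    by_contra hc
    push_neg at hc
    have hstrict : ∀ k < n, (occ α k).ncard < (occ α (k + 1)).ncard := fun k hk =>
      lt_of_le_of_ne (occ_mono α k) (hc k hk)
    have key : ∀ k, k ≤ n → k + 1 ≤ (occ α k).ncard := by
      intro k
      induction k with
      | zero => intro _; rw [occ_zero]
      | succ k ih =>
        intro hk
        have h1 := hstrict k (by omega)
        have h2 := ih (by omega)
        omega
    have := key n le_rfl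
    omega
  obtain ⟨k, hkn, hkeq⟩ := hplateau
  -- determinism: window of length k determines next letter
  have hinj : Set.InjOn (fun w : Fin (k + 1) → C => w ∘ Fin.castSucc) (occ α (k + 1)) := by
    apply Set.injOn_of_ncard_image_eq ?_ (Set.toFinite _)
    rw [occ_image]; exact hkeq
  have hdet : ∀ m m' : ℕ, win α k m = win α k m' → α (m + k) = α (m' + k) := by
    intro m m' hw
    have hr : (fun w : Fin (k + 1) → C => w ∘ Fin.castSucc) (win α (k + 1) m)
        = (fun w : Fin (k + 1) → C => w ∘ Fin.castSucc) (win α (k + 1) m') := by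
      funext i
      have := congrFun hw i
      simpa [win] using this
    have := hinj (win_mem α (k + 1) m) (win_mem α (k + 1) m') hr
    have := congrFun this (Fin.last k)
    simpa [win] using this
  -- pigeonhole on windows of length n at positions 0..n
  have hrepeat : ∃ a b : ℕ, a < b ∧ b ≤ n ∧ win α n a = win α n b := by
    have hfin : (occ α n).Finite := Set.toFinite _
    have hcard : hfin.toFinset.card < (Finset.range (n + 1)).card := by
      rw [Finset.card_range, ← Set.ncard_eq_toFinset_card _ hfin]
      omega
    have hmaps : ∀ m ∈ Finset.range (n + 1), win α n m ∈ hfin.toFinset := fun m _ =>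
      hfin.mem_toFinset.mpr (win_mem α n m)
    obtain ⟨a, ha, b, hb, hne, heq⟩ :=
      Finset.exists_ne_map_eq_of_card_lt_of_maps_to hcard hmaps
    rw [Finset.mem_range] at ha hb
    rcases Nat.lt_or_ge a b with h' | h'
    · exact ⟨a, b, h', by omega, heq⟩
    · exact ⟨b, a, by omega, by omega, heq.symm⟩
  obtain ⟨a, b, hab, hbn, hwab⟩ := hrepeat
  refine ⟨b - a, a, by omega, by omega, by omega, ?_⟩
  intro m
  induction m using Nat.strong_induction_on with
  | _ m IH =>
    intro hm
    rcases Nat.lt_or_ge m (a + n) with hcase | hcase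
    · have hi : m - a < n := by omega
      have := congrFun hwab ⟨m - a, hi⟩
      simp only [win] at this
      rw [show a + ((⟨m - a, hi⟩ : Fin n) : ℕ) = m from by simp; omega,
        show b + ((⟨m - a, hi⟩ : Fin n) : ℕ) = m + (b - a) from by simp; omega] at this
      exact this.symm
    · have hwk : win α k (m - k) = win α k (m - k + (b - a)) := by
        funext i
        have hi := i.isLt
        have h1 := IH (m - k + i) (by omega) (by omega)
        simp only [win]
        rw [show m - k + (b - a) + (i : ℕ) = m - k + (i : ℕ) + (b - a) from by omega]
        exact h1.symm
      have := hdet _ _ hwk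
      rw [show m - k + k = m from by omega,
        show m - k + (b - a) + k = m + (b - a) from by omega] at this
      exact this.symm
end

section
/- Let η : ℤ² → A with A finite, and suppose ℓ is a nonexpansive line for η. Then at least one of the two orientations on ℓ determines a nonexpansive direction for η: there exist f ≠ g in X_η agreeing on a half-plane whose boundary is parallel to ℓ. -/
def lineSet (a d : ℝ × ℝ) : Set (ℝ × ℝ) := {p | ∃ t : ℝ, p = a + t • d}

def IsExpansiveLine {A : Type*} (X : Set ((ℤ × ℤ) → A)) (ℓ : Set (ℝ × ℝ)) : Prop :=
  ∃ r : ℝ, 0 < r ∧ ∀ f ∈ X, ∀ g ∈ X,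
    (∀ p : ℤ × ℤ, Metric.infDist (((p.1 : ℝ), (p.2 : ℝ)) : ℝ × ℝ) ℓ < r → f p = g p) →
    f = g

def orbitClosure {A : Type*} [TopologicalSpace A] (η : ℤ × ℤ → A) :
    Set ((ℤ × ℤ) → A) :=
  closure {g : (ℤ × ℤ) → A | ∃ u : ℤ × ℤ, g = fun x => η (x + u)}

def slin (d p : ℤ × ℤ) : ℤ := d.1 * p.2 - d.2 * p.1

lemma translate_mem {A : Type*} [TopologicalSpace A] (η : ℤ × ℤ → A) (u : ℤ × ℤ)
    {h : (ℤ × ℤ) → A} (hh : h ∈ orbitClosure η) :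
    (fun x => h (x + u)) ∈ orbitClosure η := by
  have hc : Continuous (fun (f : (ℤ × ℤ) → A) => (fun x => f (x + u))) :=
    continuous_pi fun x => continuous_apply (x + u)
  have h1 : (fun x => h (x + u)) ∈
      closure ((fun (f : (ℤ × ℤ) → A) => (fun x => f (x + u))) ''
        {g : (ℤ × ℤ) → A | ∃ v : ℤ × ℤ, g = fun x => η (x + v)}) :=
    image_closure_subset_closure_image hc ⟨h, hh, rfl⟩
  refine closure_mono ?_ h1
  rintro g ⟨g', ⟨v, rfl⟩, rfl⟩
  exact ⟨v + u, funext fun x => by simp [add_assoc, add_comm u v]⟩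

lemma bezout_pt (d : ℤ × ℤ) : ∃ q₀ : ℤ × ℤ, slin d q₀ = Int.gcd d.1 d.2 := by
  refine ⟨(-Int.gcdB d.1 d.2, Int.gcdA d.1 d.2), ?_⟩
  have := Int.gcd_eq_gcd_ab d.1 d.2
  simp only [slin]
  linarith [this]

lemma limit_lemma {A : Type*} [Fintype A] [TopologicalSpace A] [DiscreteTopology A]
    (η : ℤ × ℤ → A) (σ : ℤ × ℤ → ℤ) (q₀ : ℤ × ℤ)
    (H : ∀ m : ℕ, ∃ F G : (ℤ × ℤ) → A, F ∈ orbitClosure η ∧ G ∈ orbitClosure η ∧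
      F q₀ ≠ G q₀ ∧ ∀ q, -(m : ℤ) ≤ σ q → σ q ≤ 0 → F q = G q) :
    ∃ f g : (ℤ × ℤ) → A, f ∈ orbitClosure η ∧ g ∈ orbitClosure η ∧ f q₀ ≠ g q₀ ∧
      ∀ q, σ q ≤ 0 → f q = g q := by
  choose F G hF hG hFG hag using H
  have hXc : IsCompact (orbitClosure η ×ˢ orbitClosure η) :=
    (isClosed_closure.isCompact).prod (isClosed_closure.isCompact)
  obtain ⟨⟨f, g⟩, hfg, φ, hφ, hlim⟩ :=
    hXc.tendsto_subseq (x := fun n => (F n, G n)) (fun n => Set.mk_mem_prod (hF n) (hG n))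
  have hlimF : ∀ q, ∀ᶠ n in Filter.atTop, F (φ n) q = f q := by
    intro q
    have : Filter.Tendsto (fun n => F (φ n) q) Filter.atTop (nhds (f q)) :=
      ((continuous_apply q).comp continuous_fst).continuousAt.tendsto.comp hlim
    simpa [nhds_discrete, Filter.tendsto_pure] using this
  have hlimG : ∀ q, ∀ᶠ n in Filter.atTop, G (φ n) q = g q := by
    intro q
    have : Filter.Tendsto (fun n => G (φ n) q) Filter.atTop (nhds (g q)) :=
      ((continuous_apply q).comp continuous_snd).continuousAt.tendsto.comp hlim
    simpa [nhds_discrete, Filter.tendsto_pure] using this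
  refine ⟨f, g, hfg.1, hfg.2, ?_, ?_⟩
  · obtain ⟨n, hn1, hn2⟩ := ((hlimF q₀).and (hlimG q₀)).exists
    rw [← hn1, ← hn2]
    exact hFG (φ n)
  · intro q hq
    have h3 : ∀ᶠ n in Filter.atTop, F (φ n) q = G (φ n) q := by
      filter_upwards [Filter.eventually_ge_atTop (σ q).natAbs] with n hn
      refine hag (φ n) q ?_ hq
      have h4 : (σ q).natAbs ≤ φ n := le_trans hn (hφ.le_apply)
      omega
    obtain ⟨n, ⟨hn1, hn2⟩, hn3⟩ := (((hlimF q).and (hlimG q)).and h3).exists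
    rw [← hn1, ← hn2, hn3]

lemma slin_add (d p q : ℤ × ℤ) : slin d (p + q) = slin d p + slin d q := by
  simp [slin, Prod.fst_add, Prod.snd_add]; ring

lemma case_pos {A : Type*} [Fintype A] [TopologicalSpace A] [DiscreteTopology A]
    (η : ℤ × ℤ → A) (d : ℤ × ℤ) (hd : d ≠ 0)
    (H : ∀ m : ℕ, ∃ f g : (ℤ × ℤ) → A, ∃ p : ℤ × ℤ,
      f ∈ orbitClosure η ∧ g ∈ orbitClosure η ∧ f p ≠ g p ∧ (m : ℤ) < slin d p ∧
      ∀ q, |slin d q| < slin d p → f q = g q) :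
    ∃ f g : (ℤ × ℤ) → A, f ∈ orbitClosure η ∧ g ∈ orbitClosure η ∧ f ≠ g ∧
      ∀ p, slin d p ≤ 0 → f p = g p := by
  obtain ⟨q₀, hq₀⟩ := bezout_pt d
  set g0 : ℤ := (Int.gcd d.1 d.2 : ℤ) with hg0
  have hg0pos : 0 < g0 := by
    have : d.1 ≠ 0 ∨ d.2 ≠ 0 := by
      by_contra hcon
      push_neg at hcon
      exact hd (Prod.ext hcon.1 hcon.2)
    rw [hg0]
    exact_mod_cast Int.gcd_pos_iff.mpr this
  have hdvd1 : g0 ∣ d.1 := Int.gcd_dvd_left d.1 d.2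
  have hdvd2 : g0 ∣ d.2 := Int.gcd_dvd_right d.1 d.2
  have H' : ∀ m : ℕ, ∃ F G : (ℤ × ℤ) → A, F ∈ orbitClosure η ∧ G ∈ orbitClosure η ∧
      F q₀ ≠ G q₀ ∧ ∀ q, -(m : ℤ) ≤ slin d q → slin d q ≤ 0 → F q = G q := by
    intro m
    obtain ⟨f, g, p, hf, hg, hfg, hmp, hag⟩ := H m
    have hdvdp : g0 ∣ slin d p := by
      exact dvd_sub (Dvd.dvd.mul_right hdvd1 _) (Dvd.dvd.mul_right hdvd2 _)
    have hg0le : g0 ≤ slin d p := Int.le_of_dvd (by linarith [Int.ofNat_nonneg m]) hdvdp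
    set u : ℤ × ℤ := p - q₀ with hu
    have hslu : slin d u = slin d p - g0 := by
      have : slin d (u + q₀) = slin d u + slin d q₀ := slin_add d u q₀
      simp [hu, hq₀] at this ⊢
      linarith [this]
    refine ⟨fun x => f (x + u), fun x => g (x + u), translate_mem η u hf,
      translate_mem η u hg, ?_, ?_⟩
    · have h5 : q₀ + u = p := by simp [hu]
      simpa [h5] using hfg
    · intro q hq1 hq2
      have h6 : slin d (q + u) = slin d q + slin d p - g0 := by
        rw [slin_add, hslu]; ring
      refine hag (q + u) ?_
      rw [h6, abs_lt]
      constructor <;> [linarith; linarith]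
  obtain ⟨f, g, hf, hg, hfg, hagr⟩ := limit_lemma η (slin d) q₀ H'
  exact ⟨f, g, hf, hg, fun hcon => hfg (by rw [hcon]), hagr⟩

lemma infDist_le_slin (d : ℤ × ℤ) (hd : d ≠ 0) (p : ℤ × ℤ) :
    Metric.infDist (((p.1 : ℝ), (p.2 : ℝ)) : ℝ × ℝ)
      (lineSet 0 (((d.1 : ℝ), (d.2 : ℝ)) : ℝ × ℝ)) ≤ |(slin d p : ℝ)| := by
  set d1 : ℝ := (d.1 : ℝ)
  set d2 : ℝ := (d.2 : ℝ)
  set a : ℝ := (p.1 : ℝ)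
  set b : ℝ := (p.2 : ℝ)
  have hD : 0 < d1 ^ 2 + d2 ^ 2 := by
    rcases (by by_contra hcon; push_neg at hcon; exact hd (Prod.ext hcon.1 hcon.2) :
      d.1 ≠ 0 ∨ d.2 ≠ 0) with h | h
    · have : d1 ≠ 0 := Int.cast_ne_zero.mpr h
      positivity
    · have : d2 ≠ 0 := Int.cast_ne_zero.mpr h
      positivity
  set D : ℝ := d1 ^ 2 + d2 ^ 2
  set t : ℝ := (a * d1 + b * d2) / D
  have hmem : (t • ((d1, d2) : ℝ × ℝ)) ∈ lineSet 0 ((d1, d2) : ℝ × ℝ) := ⟨t, by simp⟩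
  refine le_trans (Metric.infDist_le_dist_of_mem hmem) ?_
  have hS : (slin d p : ℝ) = d1 * b - d2 * a := by
    simp [slin, d1, d2, a, b]
  rw [Prod.dist_eq]
  have hd1 : |d1| ≤ D := by
    have h1 : |(d.1 : ℤ)| ≤ d.1 ^ 2 + d.2 ^ 2 := by nlinarith [abs_nonneg d.1, sq_abs d.1, sq_nonneg (|d.1| - 1), sq_nonneg d.2]
    calc |d1| = ((|d.1| : ℤ) : ℝ) := by simp [d1]
    _ ≤ ((d.1 ^ 2 + d.2 ^ 2 : ℤ) : ℝ) := by exact_mod_cast h1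
    _ = D := by push_cast [D, d1, d2]; ring
  have hd2 : |d2| ≤ D := by
    have h1 : |(d.2 : ℤ)| ≤ d.1 ^ 2 + d.2 ^ 2 := by nlinarith [abs_nonneg d.2, sq_abs d.2, sq_nonneg (|d.2| - 1), sq_nonneg d.1]
    calc |d2| = ((|d.2| : ℤ) : ℝ) := by simp [d2]
    _ ≤ ((d.1 ^ 2 + d.2 ^ 2 : ℤ) : ℝ) := by exact_mod_cast h1
    _ = D := by push_cast [D, d1, d2]; ring
  have e1 : a - t * d1 = -d2 * (d1 * b - d2 * a) / D := by
    field_simp [t]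
    have ht : t * D = a * d1 + b * d2 := div_mul_cancel₀ _ hD.ne'
    have hDdef : D = d1 ^ 2 + d2 ^ 2 := rfl
    linear_combination (-d1) * ht + a * hDdef
  have e2 : b - t * d2 = d1 * (d1 * b - d2 * a) / D := by
    field_simp [t]
    have ht : t * D = a * d1 + b * d2 := div_mul_cancel₀ _ hD.ne'
    have hDdef : D = d1 ^ 2 + d2 ^ 2 := rfl
    linear_combination (-d2) * ht + b * hDdef
  have hfst : dist a (t • ((d1, d2) : ℝ × ℝ)).1 ≤ |(slin d p : ℝ)| := by
    rw [Prod.smul_fst, smul_eq_mul, Real.dist_eq, hS, e1]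
    rw [abs_div, abs_mul, abs_neg, abs_of_pos hD]
    rw [div_le_iff₀ hD]
    nlinarith [abs_nonneg (d1 * b - d2 * a), abs_nonneg d2, hD]
  have hsnd : dist b (t • ((d1, d2) : ℝ × ℝ)).2 ≤ |(slin d p : ℝ)| := by
    rw [Prod.smul_snd, smul_eq_mul, Real.dist_eq, hS, e2]
    rw [abs_div, abs_mul, abs_of_pos hD]
    rw [div_le_iff₀ hD]
    nlinarith [abs_nonneg (d1 * b - d2 * a), abs_nonneg d1, hD]
  exact max_le hfst hsnd

lemma slin_neg (d q : ℤ × ℤ) : slin (-d) q = -slin d q := by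
  simp [slin]; ring

/-- if the rational line through the origin with integer direction d is
a nonexpansive line for η, then at least one of its two orientations determines a
nonexpansive direction for η: there are f ≠ g in X_η agreeing on a half-plane
bounded by a line through the origin parallel to d. -/
theorem stmt_13 {A : Type*} [Fintype A] [TopologicalSpace A] [DiscreteTopology A]
    (η : ℤ × ℤ → A) (d : ℤ × ℤ) (hd : d ≠ 0)
    (hne : ¬ IsExpansiveLine (orbitClosure η)
      (lineSet 0 (((d.1 : ℝ), (d.2 : ℝ)) : ℝ × ℝ))) :
    ∃ f g : (ℤ × ℤ) → A, f ∈ orbitClosure η ∧ g ∈ orbitClosure η ∧ f ≠ g ∧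
      ((∀ p : ℤ × ℤ, 0 ≤ d.1 * p.2 - d.2 * p.1 → f p = g p) ∨
       (∀ p : ℤ × ℤ, 0 ≤ -(d.1 * p.2 - d.2 * p.1) → f p = g p)) := by
  classical
  unfold IsExpansiveLine at hne
  push_neg at hne
  have Hn : ∀ n : ℕ, ∃ f g : (ℤ × ℤ) → A, f ∈ orbitClosure η ∧ g ∈ orbitClosure η ∧
      f ≠ g ∧ ∀ p : ℤ × ℤ, |slin d p| ≤ (n : ℤ) → f p = g p := by
    intro n
    obtain ⟨f, hf, g, hg, hag, hfg⟩ := hne ((n : ℝ) + 1) (by positivity)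
    refine ⟨f, g, hf, hg, hfg, fun p hp => ?_⟩
    refine hag p (lt_of_le_of_lt (infDist_le_slin d hd p) ?_)
    have : |(slin d p : ℝ)| ≤ (n : ℝ) := by exact_mod_cast (by simpa using hp : |slin d p| ≤ (n:ℤ))
    linarith
  choose f g hf hg hfg hag using Hn
  have hPne : ∀ n : ℕ, ∃ k : ℕ, ∃ p : ℤ × ℤ, (slin d p).natAbs = k ∧ f n p ≠ g n p := by
    intro n
    obtain ⟨p, hp⟩ := Function.ne_iff.mp (hfg n)
    exact ⟨(slin d p).natAbs, p, rfl, hp⟩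
  set m : ℕ → ℕ := fun n => Nat.find (hPne n) with hm
  have hspec : ∀ n, ∃ p : ℤ × ℤ, (slin d p).natAbs = m n ∧ f n p ≠ g n p :=
    fun n => Nat.find_spec (hPne n)
  choose p hp1 hp2 using hspec
  have hmin : ∀ n q, (slin d q).natAbs < m n → f n q = g n q := by
    intro n q hq
    by_contra hcon
    exact Nat.find_min (hPne n) hq ⟨q, rfl, hcon⟩
  have hmn : ∀ n : ℕ, (n : ℤ) < (m n : ℤ) := by
    intro n
    by_contra hcon
    push_neg at hcon
    refine hp2 n (hag n (p n) ?_)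
    rw [Int.abs_eq_natAbs, hp1 n]
    exact_mod_cast hcon
  by_cases hI : {n : ℕ | 0 ≤ slin d (p n)}.Infinite
  · obtain ⟨F, G, hF, hG, hFG, hagr⟩ := case_pos η d hd (fun k => by
      obtain ⟨n, hnI, hkn⟩ := hI.exists_gt k
      have hsl : slin d (p n) = (m n : ℤ) := by
        rw [← hp1 n, Int.natAbs_of_nonneg hnI]
      refine ⟨f n, g n, p n, hf n, hg n, hp2 n, ?_, fun q hq => ?_⟩
      · rw [hsl]; have := hmn n; push_cast at this ⊢; omega
      · refine hmin n q ?_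
        rw [hsl] at hq
        rw [Int.abs_eq_natAbs] at hq
        exact_mod_cast hq)
    exact ⟨F, G, hF, hG, hFG, Or.inr (fun q hq => hagr q (by simp only [slin]; linarith))⟩
  · have hI' : {n : ℕ | slin d (p n) < 0}.Infinite := by
      have h1 := (Set.not_infinite.mp hI).infinite_compl
      refine h1.mono ?_
      intro n hn
      simp only [Set.mem_compl_iff, Set.mem_setOf_eq] at hn ⊢
      omega
    obtain ⟨F, G, hF, hG, hFG, hagr⟩ := case_pos η (-d) (neg_ne_zero.mpr hd) (fun k => by
      obtain ⟨n, hnI, hkn⟩ := hI'.exists_gt k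
      have hnI' : slin d (p n) < 0 := hnI
      have hsl : slin (-d) (p n) = (m n : ℤ) := by
        rw [slin_neg, ← hp1 n]
        omega
      refine ⟨f n, g n, p n, hf n, hg n, hp2 n, ?_, fun q hq => ?_⟩
      · rw [hsl]; have := hmn n; push_cast at this ⊢; omega
      · refine hmin n q ?_
        rw [hsl] at hq
        rw [slin_neg, abs_neg, Int.abs_eq_natAbs] at hq
        exact_mod_cast hq)
    refine ⟨F, G, hF, hG, hFG, Or.inl (fun q hq => hagr q ?_)⟩
    rw [slin_neg]
    simp only [slin]
    linarith
end

section
/- Let η : ℤ² → A with A finite, suppose P_η(R_{n,3}) ≤ 3n for some n, and assume D_η(R_{n,3}) ≤ 0. Then there exists a convex set S ⊆ R_{n,3}, minimal with respect to inclusion among convex subsets of R_{n,3} with nonpositive discrepancy, and for such minimal S every boundary vertex of S is η-generated by S (i.e. S is an η-generating set), and moreover every nonempty convex proper subset S′ ⊂ S satisfies D_η(S′) ≥ D_η(S) + 1. -/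
def Generated {A : Type*} (η : ℤ × ℤ → A) (S : Finset (ℤ × ℤ)) (x : ℤ × ℤ) : Prop :=
  ∀ u v : ℤ × ℤ, (∀ y ∈ S.erase x, η (y + u) = η (y + v)) → η (x + u) = η (x + v)

/-- The embedding ℤ² → ℝ². -/
def toR2 (q : ℤ × ℤ) : ℝ × ℝ := ((q.1 : ℝ), (q.2 : ℝ))

/-- S ⊆ ℤ² is convex if S = conv(S) ∩ ℤ². -/
def IsConvexSet (S : Finset (ℤ × ℤ)) : Prop :=
  ∀ p : ℤ × ℤ, toR2 p ∈ convexHull ℝ (toR2 '' (S : Set (ℤ × ℤ))) → p ∈ S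

/-- x is a boundary vertex of S: a vertex of the polygon ∂ conv(S). -/
def IsBoundaryVertex (S : Finset (ℤ × ℤ)) (x : ℤ × ℤ) : Prop :=
  x ∈ S ∧ toR2 x ∉ convexHull ℝ (toR2 '' ((S.erase x : Finset (ℤ × ℤ)) : Set (ℤ × ℤ)))

/-- The rectangle R_{n,k} = {0,…,n−1} × {0,…,k−1}. -/
def Rnk (n k : ℕ) : Finset (ℤ × ℤ) :=
  (Finset.range n ×ˢ Finset.range k).image (fun p : ℕ × ℕ => ((p.1 : ℤ), (p.2 : ℤ)))

section aux

variable {A : Type*} [Fintype A] (η : ℤ × ℤ → A)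

def patternSet (S : Finset (ℤ × ℤ)) : Set (S → A) :=
  {g : S → A | ∃ u : ℤ × ℤ, ∀ x : S, g x = η ((x : ℤ × ℤ) + u)}

lemma Pcx_eq (S : Finset (ℤ × ℤ)) : Pcx η S = (patternSet η S).ncard := rfl

lemma patternSet_nonempty (S : Finset (ℤ × ℤ)) : (patternSet η S).Nonempty :=
  ⟨fun x => η x, 0, fun x => by simp⟩

lemma Pcx_pos (S : Finset (ℤ × ℤ)) : 1 ≤ Pcx η S := by
  rw [Pcx_eq]
  have : 0 < (patternSet η S).ncard :=
    (Set.ncard_pos (Set.toFinite _)).2 (patternSet_nonempty η S)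
  omega

/-- restriction map -/
def restr {S' S : Finset (ℤ × ℤ)} (h : S' ⊆ S) (g : S → A) : S' → A :=
  fun y => g ⟨(y : ℤ × ℤ), h y.2⟩

lemma patternSet_restr {S' S : Finset (ℤ × ℤ)} (h : S' ⊆ S) :
    patternSet η S' = restr h '' patternSet η S := by
  ext g
  constructor
  · rintro ⟨u, hu⟩
    refine ⟨fun x => η ((x : ℤ × ℤ) + u), ⟨u, fun _ => rfl⟩, ?_⟩
    funext y
    exact (hu y).symm
  · rintro ⟨g', ⟨u, hu⟩, rfl⟩
    exact ⟨u, fun y => hu ⟨(y : ℤ × ℤ), h y.2⟩⟩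

lemma Pcx_mono {S' S : Finset (ℤ × ℤ)} (h : S' ⊆ S) : Pcx η S' ≤ Pcx η S := by
  rw [Pcx_eq, Pcx_eq, patternSet_restr η h]
  exact Set.ncard_image_le (Set.toFinite _)

lemma generated_of_Pcx_le {S : Finset (ℤ × ℤ)} {x : ℤ × ℤ} (hx : x ∈ S)
    (hle : Pcx η S ≤ Pcx η (S.erase x)) : Generated η S x := by
  intro u v huv
  have hsub : S.erase x ⊆ S := Finset.erase_subset _ _
  have heq : (restr (A := A) hsub '' patternSet η S).ncard = (patternSet η S).ncard := by
    have h1 := Pcx_mono η hsub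
    rw [Pcx_eq, Pcx_eq, patternSet_restr η hsub] at hle h1
    omega
  have hinj : Set.InjOn (restr hsub) (patternSet η S) :=
    Set.injOn_of_ncard_image_eq heq (Set.toFinite _)
  set gu : S → A := fun y => η ((y : ℤ × ℤ) + u) with hgu
  set gv : S → A := fun y => η ((y : ℤ × ℤ) + v) with hgv
  have hmu : gu ∈ patternSet η S := ⟨u, fun _ => rfl⟩
  have hmv : gv ∈ patternSet η S := ⟨v, fun _ => rfl⟩
  have hres : restr hsub gu = restr hsub gv := by
    funext y
    exact huv (y : ℤ × ℤ) y.2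
  have := hinj hmu hmv hres
  have := congrFun this ⟨x, hx⟩
  simpa [hgu, hgv] using this

lemma two_le_Pcx_singleton (hall : ∀ a : A, ∃ u : ℤ × ℤ, η u = a)
    (hA : 2 ≤ Fintype.card A) (x : ℤ × ℤ) : 2 ≤ Pcx η {x} := by
  obtain ⟨a, b, hab⟩ := (Fintype.one_lt_card_iff (α := A)).mp (by omega)
  obtain ⟨ua, hua⟩ := hall a
  obtain ⟨ub, hub⟩ := hall b
  rw [Pcx_eq]
  have ha : (fun _ : ({x} : Finset (ℤ × ℤ)) => a) ∈ patternSet η {x} := by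
    refine ⟨ua - x, fun y => ?_⟩
    have hy : (y : ℤ × ℤ) = x := Finset.mem_singleton.mp y.2
    rw [hy]
    simp [hua]
  have hb : (fun _ : ({x} : Finset (ℤ × ℤ)) => b) ∈ patternSet η {x} := by
    refine ⟨ub - x, fun y => ?_⟩
    have hy : (y : ℤ × ℤ) = x := Finset.mem_singleton.mp y.2
    rw [hy]
    simp [hub]
  have hne : (fun _ : ({x} : Finset (ℤ × ℤ)) => a) ≠ (fun _ => b) := by
    intro h
    exact hab (congrFun h ⟨x, by simp⟩)
  exact (Set.one_lt_ncard_iff (Set.toFinite _)).2 ⟨_, _, ha, hb, hne⟩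

lemma mem_Rnk {n k : ℕ} {p : ℤ × ℤ} :
    p ∈ Rnk n k ↔ 0 ≤ p.1 ∧ p.1 < n ∧ 0 ≤ p.2 ∧ p.2 < k := by
  simp only [Rnk, Finset.mem_image, Finset.mem_product, Finset.mem_range, Prod.exists]
  constructor
  · rintro ⟨a, b, ⟨ha, hb⟩, rfl⟩
    refine ⟨Int.ofNat_nonneg a, ?_, Int.ofNat_nonneg b, ?_⟩
    · show (a : ℤ) < (n : ℤ); exact_mod_cast ha
    · show (b : ℤ) < (k : ℤ); exact_mod_cast hb
  · rintro ⟨h1, h2, h3, h4⟩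
    refine ⟨p.1.toNat, p.2.toNat, ⟨?_, ?_⟩, ?_⟩
    · omega
    · omega
    · simp [Int.toNat_of_nonneg h1, Int.toNat_of_nonneg h3]

lemma isConvexSet_Rnk (n k : ℕ) : IsConvexSet (Rnk n k) := by
  rcases Nat.eq_zero_or_pos n with rfl | hn
  · intro p hp
    simp only [Rnk] at hp ⊢
    simp at hp
  rcases Nat.eq_zero_or_pos k with rfl | hk
  · intro p hp
    simp only [Rnk] at hp ⊢
    simp at hp
  intro p hp
  have hsub : toR2 '' ((Rnk n k : Set (ℤ × ℤ))) ⊆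
      Set.Icc ((0 : ℝ), (0 : ℝ)) (((n : ℝ) - 1), ((k : ℝ) - 1)) := by
    rintro q ⟨z, hz, rfl⟩
    rw [Finset.mem_coe, mem_Rnk] at hz
    obtain ⟨h1, h2, h3, h4⟩ := hz
    rw [Set.mem_Icc, Prod.le_def, Prod.le_def]
    simp only [toR2]
    have e1 : z.1 ≤ (n : ℤ) - 1 := by omega
    have e2 : z.2 ≤ (k : ℤ) - 1 := by omega
    have f1 : (z.1 : ℝ) ≤ (n : ℝ) - 1 := by
      calc (z.1 : ℝ) ≤ ((n : ℤ) - 1 : ℤ) := by exact_mod_cast e1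
        _ = (n : ℝ) - 1 := by push_cast; ring
    have f2 : (z.2 : ℝ) ≤ (k : ℝ) - 1 := by
      calc (z.2 : ℝ) ≤ ((k : ℤ) - 1 : ℤ) := by exact_mod_cast e2
        _ = (k : ℝ) - 1 := by push_cast; ring
    exact ⟨⟨by exact_mod_cast h1, by exact_mod_cast h3⟩, ⟨f1, f2⟩⟩
  have hhull := convexHull_min hsub ((convex_Icc (𝕜 := ℝ) _ _))
  have hpmem := hhull hp
  rw [Set.mem_Icc, Prod.le_def, Prod.le_def] at hpmem
  obtain ⟨⟨a1, a2⟩, ⟨b1, b2⟩⟩ := hpmem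
  simp only [toR2] at a1 a2 b1 b2
  rw [mem_Rnk]
  refine ⟨by exact_mod_cast a1, ?_, by exact_mod_cast a2, ?_⟩
  · have : (p.1 : ℝ) ≤ (n : ℝ) - 1 := b1
    have h : (p.1 : ℝ) ≤ (((n : ℤ) - 1 : ℤ) : ℝ) := by push_cast; linarith
    have h' : p.1 ≤ (n : ℤ) - 1 := by exact_mod_cast h
    omega
  · have : (p.2 : ℝ) ≤ (k : ℝ) - 1 := b2
    have h : (p.2 : ℝ) ≤ (((k : ℤ) - 1 : ℤ) : ℝ) := by push_cast; linarith
    have h' : p.2 ≤ (k : ℤ) - 1 := by exact_mod_cast h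
    omega

lemma exists_minimal (n : ℕ) :
    ∀ S : Finset (ℤ × ℤ), S ⊆ Rnk n 3 → S.Nonempty → IsConvexSet S → Dcx η S ≤ 0 →
      ∃ S₀ : Finset (ℤ × ℤ), S₀ ⊆ S ∧ S₀.Nonempty ∧ IsConvexSet S₀ ∧ Dcx η S₀ ≤ 0 ∧
        ∀ S' : Finset (ℤ × ℤ), S' ⊆ S₀ → S'.Nonempty → IsConvexSet S' → Dcx η S' ≤ 0 →
          S' = S₀ := by
  intro S
  induction S using Finset.strongInduction with
  | _ S ih =>
    intro hsub hne hcv hd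
    by_cases hmin : ∀ S' : Finset (ℤ × ℤ), S' ⊆ S → S'.Nonempty → IsConvexSet S' →
        Dcx η S' ≤ 0 → S' = S
    · exact ⟨S, subset_rfl, hne, hcv, hd, hmin⟩
    · push_neg at hmin
      obtain ⟨S', h1, h2, h3, h4, h5⟩ := hmin
      obtain ⟨S₀, g1, g2, g3, g4, g5⟩ :=
        ih S' (lt_of_le_of_ne h1 h5) (h1.trans hsub) h2 h3 h4
      exact ⟨S₀, g1.trans h1, g2, g3, g4, g5⟩

end aux

/-- under P_η(R_{n,3}) ≤ 3n (so D_η(R_{n,3}) ≤ 0), there exists a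
convex S ⊆ R_{n,3}, minimal by inclusion among nonempty convex subsets of
nonpositive discrepancy, such that every boundary vertex of S is η-generated by S
(S is an η-generating set), and every nonempty convex proper subset S′ ⊂ S
satisfies D_η(S′) ≥ D_η(S) + 1. -/
theorem stmt_14 {A : Type*} [Fintype A] (hA : 2 ≤ Fintype.card A)
    (η : ℤ × ℤ → A) (hall : ∀ a : A, ∃ u : ℤ × ℤ, η u = a)
    (n : ℕ) (hP : Pcx η (Rnk n 3) ≤ 3 * n) (hD : Dcx η (Rnk n 3) ≤ 0) :
    ∃ S : Finset (ℤ × ℤ), S ⊆ Rnk n 3 ∧ S.Nonempty ∧ IsConvexSet S ∧ Dcx η S ≤ 0 ∧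
      (∀ S' : Finset (ℤ × ℤ), S' ⊆ S → S'.Nonempty → IsConvexSet S' →
        Dcx η S' ≤ 0 → S' = S) ∧
      (∀ x : ℤ × ℤ, IsBoundaryVertex S x → Generated η S x) ∧
      (∀ S' : Finset (ℤ × ℤ), S' ⊆ S → S' ≠ S → S'.Nonempty → IsConvexSet S' →
        Dcx η S + 1 ≤ Dcx η S') := by
  have hn : 0 < n := by
    by_contra h
    have : n = 0 := by omega
    subst this
    have h1 := Pcx_pos η (Rnk 0 3)
    omega
  have hRne : (Rnk n 3).Nonempty := ⟨(0, 0), mem_Rnk.2 (by norm_num; omega)⟩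
  obtain ⟨S, hsub, hne, hcv, hd, hmin⟩ :=
    exists_minimal η n (Rnk n 3) subset_rfl hRne (isConvexSet_Rnk n 3) hD
  -- proper subset property
  have hprop : ∀ S' : Finset (ℤ × ℤ), S' ⊆ S → S' ≠ S → S'.Nonempty → IsConvexSet S' →
      Dcx η S + 1 ≤ Dcx η S' := by
    intro S' h1 h2 h3 h4
    have : ¬ Dcx η S' ≤ 0 := fun h => h2 (hmin S' h1 h3 h4 h)
    omega
  refine ⟨S, hsub, hne, hcv, hd, hmin, ?_, hprop⟩
  intro x ⟨hxS, hxv⟩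
  -- the erase is convex
  have hTcv : IsConvexSet (S.erase x) := by
    intro p hp
    have hsub2 : toR2 '' ((S.erase x : Finset (ℤ × ℤ)) : Set (ℤ × ℤ)) ⊆
        toR2 '' (S : Set (ℤ × ℤ)) :=
      Set.image_mono (f := toR2) (by exact_mod_cast Finset.erase_subset _ _)
    have hpS : p ∈ S := hcv p (convexHull_mono hsub2 hp)
    rcases eq_or_ne p x with rfl | hpx
    · exact absurd hp hxv
    · exact Finset.mem_erase.2 ⟨hpx, hpS⟩
  rcases (S.erase x).eq_empty_or_nonempty with hTe | hTne
  · -- S = {x}, contradiction with Dcx ≤ 0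
    have hS1 : S = {x} := by
      apply Finset.eq_singleton_iff_unique_mem.2
      refine ⟨hxS, fun y hy => ?_⟩
      by_contra hyx
      have : y ∈ S.erase x := Finset.mem_erase.2 ⟨hyx, hy⟩
      simp [hTe] at this
    exfalso
    have h2 := two_le_Pcx_singleton η hall hA x
    rw [hS1] at hd
    simp only [Dcx, Finset.card_singleton] at hd
    omega
  · -- proper convex nonempty subset, so Pcx erase ≥ Pcx S
    have hTne2 : S.erase x ≠ S := by
      intro h
      have := Finset.mem_erase.1 (h ▸ hxS)
      exact this.1 rfl
    have hle := hprop (S.erase x) (Finset.erase_subset _ _) hTne2 hTne hTcv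
    have hcard : (S.erase x).card = S.card - 1 := Finset.card_erase_of_mem hxS
    have hScard : 1 ≤ S.card := Finset.card_pos.2 hne
    have hPle : Pcx η S ≤ Pcx η (S.erase x) := by
      simp only [Dcx, hcard] at hle
      have : ((S.card - 1 : ℕ) : ℤ) = (S.card : ℤ) - 1 := by
        push_cast [Nat.cast_sub hScard]; ring
      omega
    exact generated_of_Pcx_le η hxS hPle
end
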